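/- Let K ⊆ L be a field extension such that K is relatively algebraically closed in L, and let w be a henselian valuation on L. Then the residue field of the restriction v = w|_K is separably closed in the residue field of w; that is, if f is a monic polynomial over the residue field Kv that is separable and irreducible and has a zero in Lw, then f has degree 1. -/

import Mathlib

/-- The inclusion of the restriction `w.comap K.subtype` of a valuation subring `w` of `L`
to a subfield `K ⊆ L` into `w` itself. -/
def restrIncl {L : Type*} [Field L] (K : Subfield L) (w : ValuationSubring L) :
    (w.comap K.subtype) →+* w where
  toFun x := ⟨K.subtype x.1, x.2⟩
  map_one' := rfl
  map_mul' _ _ := rfl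
  map_zero' := rfl
  map_add' _ _ := rfl

instance restrIncl_isLocalHom {L : Type*} [Field L] (K : Subfield L)
    (w : ValuationSubring L) : IsLocalHom (restrIncl K w) := by
  constructor
  intro x hx
  obtain ⟨u, hu⟩ := hx
  -- inverse of x in w
  have hinv : ((u⁻¹ : wˣ) : w) * restrIncl K w x = 1 := by rw [← hu]; exact u.inv_mul
  have hinvL : (((u⁻¹ : wˣ) : w) : L) * ((x : K) : L) = 1 := congrArg Subtype.val hinv
  have hxne : ((x : K) : L) ≠ 0 := by
    intro h
    rw [h, mul_zero] at hinvL
    exact zero_ne_one hinvL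
  have hinv_eq : (((u⁻¹ : wˣ) : w) : L) = ((x : K) : L)⁻¹ := by
    field_simp at hinvL ⊢
    linear_combination hinvL
  have hKmem : ((x : K) : L)⁻¹ ∈ K := by
    exact K.inv_mem (x : K).2
  have hwmem : (((x : K) : L)⁻¹ : L) ∈ w := by
    rw [← hinv_eq]; exact ((u⁻¹ : wˣ) : w).2
  refine IsUnit.of_mul_eq_one (a := x) ⟨⟨((x : K) : L)⁻¹, hKmem⟩, hwmem⟩ ?_
  apply Subtype.ext; apply Subtype.ext
  show ((x : K) : L) * ((x : K) : L)⁻¹ = 1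
  exact mul_inv_cancel₀ hxne

/-- If `K` is relatively algebraically closed in `L` and `w` is a henselian
valuation on `L` with restriction `v` to `K`, then the residue field of `v` is separably
closed in the residue field of `w`: any monic polynomial over `O_v` whose reduction is
separable and irreducible and acquires a zero in the residue field of `w` has degree 1. -/
theorem canonical_henselian_relatively_algebraically_closed_residue
    {L : Type*} [Field L] (K : Subfield L)
    (halg : ∀ x : L, IsAlgebraic K x → x ∈ K)
    (w : ValuationSubring L) [HenselianLocalRing w]
    (f : Polynomial (w.comap K.subtype))
    (hmonic : f.Monic)
    (hsep : (f.map (IsLocalRing.residue (w.comap K.subtype))).Separable)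
    (hirr : Irreducible (f.map (IsLocalRing.residue (w.comap K.subtype))))
    (hroot : ∃ z : IsLocalRing.ResidueField w,
      ((f.map (restrIncl K w)).map (IsLocalRing.residue w)).IsRoot z) :
    f.degree = 1 := by
  classical
  obtain ⟨z, hz⟩ := hroot
  let ι := restrIncl K w
  let ψ := IsLocalRing.ResidueField.map ι
  have hcomm : (IsLocalRing.residue w).comp ι
      = ψ.comp (IsLocalRing.residue (w.comap K.subtype)) := by
    ext x
    exact (IsLocalRing.ResidueField.map_residue ι x).symm
  have hgmonic : (f.map ι).Monic := hmonic.map ι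
  have hz0 : Polynomial.eval₂ (IsLocalRing.residue w) z (f.map ι) = 0 := by
    rw [Polynomial.eval₂_eq_eval_map]; exact hz
  have hz0' : Polynomial.eval₂ ψ z
      (f.map (IsLocalRing.residue (w.comap K.subtype))) = 0 := by
    rw [Polynomial.eval₂_map, ← hcomm, ← Polynomial.eval₂_map]
    exact hz0
  have hder : Polynomial.eval₂ (IsLocalRing.residue w) z
      (Polynomial.derivative (f.map ι)) ≠ 0 := by
    have h1 := hsep.eval₂_derivative_ne_zero ψ hz0'
    rw [Polynomial.derivative_map, Polynomial.eval₂_map, hcomm,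
      ← Polynomial.eval₂_map, ← Polynomial.derivative_map]
    exact h1
  have hH := (HenselianLocalRing.TFAE (R := w)).out 0 2
  obtain ⟨a, ha, -⟩ := hH.mp inferInstance (IsLocalRing.residue w)
    IsLocalRing.residue_surjective (f.map ι) hgmonic z hz0 hder
  have hcompL : w.subtype.comp ι = (algebraMap K L).comp (w.comap K.subtype).subtype :=
    RingHom.ext fun x => rfl
  have h0 : w.subtype (Polynomial.eval₂ ι a f) = 0 := by
    rw [← Polynomial.eval_map]
    rw [ha]
    exact map_zero _
  rw [Polynomial.hom_eval₂] at h0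
  have halgx : IsAlgebraic K ((a : w) : L) := by
    refine ⟨f.map (w.comap K.subtype).subtype, (hmonic.map _).ne_zero, ?_⟩
    rw [Polynomial.aeval_def, Polynomial.eval₂_map, ← hcompL]
    exact h0
  have haK : ((a : w) : L) ∈ K := halg _ halgx
  let b : w.comap K.subtype := ⟨⟨(a : L), haK⟩, a.2⟩
  have hib : ι b = a := Subtype.ext rfl
  have hinj : Function.Injective ι := fun x y h => by
    apply Subtype.ext; apply Subtype.ext
    exact congrArg (fun t => ((t : w) : L)) h
  have hfb : Polynomial.eval b f = 0 := by
    apply hinj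
    rw [map_zero, ← Polynomial.eval₂_at_apply, hib, ← Polynomial.eval_map]
    exact ha
  have hres : (f.map (IsLocalRing.residue (w.comap K.subtype))).IsRoot
      (IsLocalRing.residue (w.comap K.subtype) b) := by
    rw [Polynomial.IsRoot, Polynomial.eval_map, Polynomial.eval₂_at_apply, hfb, map_zero]
  have hdeg := Polynomial.degree_eq_one_of_irreducible_of_root hirr hres
  rwa [hmonic.degree_map] at hdeg
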